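/- Set h₁ = i + j + ε(i − j), h₂ = 1 + ε(i + 3j − k), k₁ = 1 + ε(3i + j − k), k₂ = i + j − ε(i − j), all elements of DH. Then (t − h₁)·(t − h₂) = (t − k₁)·(t − k₂) in DH[t]. (Here h₁ and k₂ are rotation quaternions with parallel axes while h₂ and k₁ are translation quaternions; this double factorization corresponds to the coupler motion of an RPRP linkage.) -/

import Mathlib

open Polynomial
noncomputable section

/-- The dual quaternions: dual numbers over the real quaternions. -/
abbrev DH : Type := DualNumber (Quaternion ℝ)

/-- Dual quaternion conjugation: the conjugate of `p + εq` is `p̄ + εq̄`. -/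
def dconj (h : DH) : DH :=
  TrivSqZeroExt.inl (star (TrivSqZeroExt.fst h)) + TrivSqZeroExt.inr (star (TrivSqZeroExt.snd h))

/-- Coefficientwise conjugation of a dual quaternion polynomial. -/
def pconj (P : Polynomial DH) : Polynomial DH :=
  P.sum fun n a => Polynomial.monomial n (dconj a)

/-- The quaternion unit i. -/
def qi : Quaternion ℝ := ⟨0,1,0,0⟩
/-- The quaternion unit j. -/
def qj : Quaternion ℝ := ⟨0,0,1,0⟩
/-- The quaternion unit k. -/
def qk : Quaternion ℝ := ⟨0,0,0,1⟩

/-- A dual quaternion polynomial is real if all its coefficients are real scalars. -/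
def IsRealPoly (P : Polynomial DH) : Prop :=
  ∃ r : Polynomial ℝ, P = r.map (algebraMap ℝ DH)

/-- The primal part of a dual quaternion polynomial. -/
def primalPart (C : Polynomial DH) : Polynomial (Quaternion ℝ) :=
  C.sum fun n a => Polynomial.monomial n (TrivSqZeroExt.fst a)


lemma factor_eq {R : Type*} [Ring R] {a b c d : R} (hs : a + b = c + d)
    (hp : a * b = c * d) :
    ((X : Polynomial R) - C a) * (X - C b) = (X - C c) * (X - C d) := by
  have h : C a * X + C b * X = C c * X + C d * X := by
    rw [← add_mul, ← add_mul, ← C_add, ← C_add, hs]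
  simp only [sub_mul, mul_sub, ← C_mul, X_mul_C, hp, sub_sub]
  rw [show C a * X + (C b * X - C (c*d)) = C a * X + C b * X - C (c*d) by rw [add_sub_assoc],
      show C c * X + (C d * X - C (c*d)) = C c * X + C d * X - C (c*d) by rw [add_sub_assoc], h]

/-- The double factorization `(t−h₁)(t−h₂) = (t−k₁)(t−k₂)` corresponding to the
coupler motion of an RPRP linkage, where `h₁ = i+j+ε(i−j)`, `h₂ = 1+ε(i+3j−k)`,
`k₁ = 1+ε(3i+j−k)`, `k₂ = i+j−ε(i−j)`. -/
theorem rprp_double_factorization :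
    ((X : Polynomial DH) -
        Polynomial.C (TrivSqZeroExt.inl (qi + qj) + TrivSqZeroExt.inr (qi - qj))) *
      (X - Polynomial.C (TrivSqZeroExt.inl 1 + TrivSqZeroExt.inr (qi + (3 : ℝ) • qj - qk))) =
    ((X : Polynomial DH) -
        Polynomial.C (TrivSqZeroExt.inl 1 + TrivSqZeroExt.inr ((3 : ℝ) • qi + qj - qk))) *
      (X - Polynomial.C (TrivSqZeroExt.inl (qi + qj) - TrivSqZeroExt.inr (qi - qj))) := by
  apply factor_eq
  · ext <;>
      simp [Quaternion.ext_iff] <;> simp [qi, qj, qk] <;> ring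
  · ext <;>
      simp [Quaternion.ext_iff,
        TrivSqZeroExt.fst_mul, TrivSqZeroExt.snd_mul] <;> simp [qi, qj, qk] <;> ring
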